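/- Let m(t) = (1-9t)/(24t) as a rational function over Q. If r and t are nonzero elements of a field of characteristic zero with t ≠ 1 and r^3 = m(t), then (1/(2r))^3 = m((1-9t)/(9-9t)). That is, the involution t ↦ (1-9t)/(9-9t) lifts through the cubic cover r^3 = (1-9t)/(24t) to r ↦ 1/(2r). -/

import Mathlib

/-- For the cubic cover `r³ = m(t)` with `m(t) = (1-9t)/(24t)` (corresponding to the
noncongruence subgroup `Γ_{18.3⁴.2³} ⊂ Γ₁(6)`), the involution `t ↦ (1-9t)/(9-9t)`
of the base lifts to `r ↦ 1/(2r)`: if `r, t` are nonzero, `t ≠ 1` and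
`r³ = (1-9t)/(24t)` in a field of characteristic zero, then
`(1/(2r))³ = m((1-9t)/(9-9t))`. -/
theorem involution_lift_18_3_2 {K : Type*} [Field K] [CharZero K] (r t : K)
    (hr : r ≠ 0) (ht0 : t ≠ 0) (ht1 : t ≠ 1)
    (h : r ^ 3 = (1 - 9 * t) / (24 * t)) :
    (1 / (2 * r)) ^ 3 =
      (1 - 9 * ((1 - 9 * t) / (9 - 9 * t))) / (24 * ((1 - 9 * t) / (9 - 9 * t))) := by
  have h9 : (1 : K) - 9 * t ≠ 0 := by
    intro h0
    apply hr
    have : r ^ 3 = 0 := by rw [h, h0, zero_div]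
    exact pow_eq_zero_iff (by norm_num) |>.mp this
  have h91 : (9 : K) - 9 * t ≠ 0 := by
    intro h0
    apply ht1
    have : (9 : K) * t = 9 * 1 := by linear_combination -h0
    exact mul_left_cancel₀ (by norm_num : (9:K) ≠ 0) this
  have hA : r ^ 3 * (24 * t) = 1 - 9 * t := by
    field_simp at h; linear_combination h
  field_simp
  linear_combination (-24) * hA
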